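/- Let X be a chi-squared random variable with d degrees of freedom. Then for any 0 < ε < 1, P(X ≥ (1+ε)d) ≤ exp(−d(ε² − ε³)/4) and P(X ≤ (1−ε)d) ≤ exp(−d(ε² − ε³)/4). -/

import Mathlib

open MeasureTheory ProbabilityTheory
open scoped ENNReal NNReal

/-- The chi-squared distribution with `d` degrees of freedom: the law of the sum of
squares of `d` i.i.d. standard normal random variables. -/
noncomputable def chiSquared (d : ℕ) : Measure ℝ :=
  Measure.map (fun ω : Fin d → ℝ => ∑ i, (ω i) ^ 2)
    (Measure.pi fun _ => gaussianReal 0 1)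

open Real in
/-- MGF of the square of a standard Gaussian. -/
lemma gauss_exp_sq {t : ℝ} (ht : t < 1/2) :
    Integrable (fun x => Real.exp (t * x ^ 2)) (gaussianReal 0 1) ∧
    ∫ x, Real.exp (t * x ^ 2) ∂(gaussianReal 0 1) = (Real.sqrt (1 - 2 * t))⁻¹ := by
  have hb : 0 < 1/2 - t := by linarith
  set f : ℝ → ℝ≥0 := fun x => (gaussianPDFReal 0 1 x).toNNReal with hf
  have hfm : Measurable f := (measurable_gaussianPDFReal 0 1).real_toNNReal
  have hgauss : gaussianReal 0 1 = volume.withDensity (fun x => (f x : ℝ≥0∞)) := by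
    rw [gaussianReal_of_var_ne_zero 0 one_ne_zero]
    rfl
  have key : ∀ x : ℝ, f x • Real.exp (t * x ^ 2)
      = (Real.sqrt (2 * π))⁻¹ * Real.exp (-(1/2 - t) * x ^ 2) := by
    intro x
    have h0 : 0 ≤ gaussianPDFReal 0 1 x := gaussianPDFReal_nonneg 0 1 x
    rw [NNReal.smul_def, smul_eq_mul, hf, Real.coe_toNNReal _ h0, gaussianPDFReal]
    push_cast
    rw [mul_one, mul_assoc, ← Real.exp_add]
    ring_nf
  have hint : Integrable (fun x => (Real.sqrt (2 * π))⁻¹ * Real.exp (-(1/2 - t) * x ^ 2)) :=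
    (integrable_exp_neg_mul_sq hb).const_mul _
  constructor
  · rw [hgauss, integrable_withDensity_iff_integrable_smul hfm]
    exact hint.congr (ae_of_all _ fun x => (key x).symm)
  · rw [hgauss, integral_withDensity_eq_integral_smul hfm]
    simp only [key]
    rw [integral_const_mul, integral_gaussian]
    have h2π : (0:ℝ) < 2 * π := by positivity
    calc (Real.sqrt (2 * π))⁻¹ * Real.sqrt (π / (1/2 - t))
        = Real.sqrt ((2 * π)⁻¹) * Real.sqrt (π / (1/2 - t)) := by rw [Real.sqrt_inv]
      _ = Real.sqrt ((2 * π)⁻¹ * (π / (1/2 - t))) := (Real.sqrt_mul (by positivity) _).symm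
      _ = Real.sqrt ((1 - 2 * t)⁻¹) := by
          congr 1
          rw [inv_eq_one_div, inv_eq_one_div, div_mul_div_comm,
            div_eq_div_iff (by positivity : (0:ℝ) < 2 * π * (1/2 - t)).ne' (by linarith : (0:ℝ) < 1 - 2 * t).ne']
          ring
      _ = (Real.sqrt (1 - 2 * t))⁻¹ := Real.sqrt_inv _

lemma pi_gauss_integral (d : ℕ) (g : ℝ → ℝ) :
    ∫ ω : Fin d → ℝ, ∏ i, g (ω i) ∂(Measure.pi fun _ => gaussianReal 0 1)
      = (∫ x, g x ∂(gaussianReal 0 1)) ^ d := by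
  letI : MeasureSpace ℝ := ⟨gaussianReal 0 1⟩
  haveI : SigmaFinite (volume : Measure ℝ) := inferInstanceAs (SigmaFinite (gaussianReal 0 1))
  simpa using MeasureTheory.integral_fintype_prod_eq_pow (𝕜 := ℝ) (ι := Fin d) (μ := gaussianReal 0 1) g

lemma pi_gauss_integrable (d : ℕ) (g : ℝ → ℝ) (hg : Integrable g (gaussianReal 0 1)) :
    Integrable (fun ω : Fin d → ℝ => ∏ i, g (ω i)) (Measure.pi fun _ => gaussianReal 0 1) := by
  letI : MeasureSpace ℝ := ⟨gaussianReal 0 1⟩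
  haveI : SigmaFinite (volume : Measure ℝ) := inferInstanceAs (SigmaFinite (gaussianReal 0 1))
  exact Integrable.fintype_prod (f := fun _ : Fin d => g) (fun _ => hg)

set_option maxHeartbeats 1000000 in
/-- Concentration of the chi-squared distribution: if `X ∼ χ²(d)` then for `0 < ε < 1`,
`P(X ≥ (1+ε)d) ≤ exp(−d(ε² − ε³)/4)` and `P(X ≤ (1−ε)d) ≤ exp(−d(ε² − ε³)/4)`. -/
theorem chiSquared_tail_bounds (d : ℕ) (ε : ℝ) (hε0 : 0 < ε) (hε1 : ε < 1) :
    chiSquared d {x | (1 + ε) * d ≤ x}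
      ≤ ENNReal.ofReal (Real.exp (-(d : ℝ) * (ε ^ 2 - ε ^ 3) / 4)) ∧
    chiSquared d {x | x ≤ (1 - ε) * d}
      ≤ ENNReal.ofReal (Real.exp (-(d : ℝ) * (ε ^ 2 - ε ^ 3) / 4)) := by
  set P : Measure (Fin d → ℝ) := Measure.pi fun _ : Fin d => gaussianReal 0 1 with hPdef
  set X : (Fin d → ℝ) → ℝ := fun ω => ∑ i, (ω i) ^ 2 with hXdef
  have hXmeas : Measurable X :=
    Finset.measurable_sum _ fun i _ => (measurable_pi_apply i).pow_const 2
  have hmap : ∀ s : Set ℝ, MeasurableSet s → chiSquared d s = P (X ⁻¹' s) := fun s hs =>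
    Measure.map_apply hXmeas hs
  -- mgf and integrability for all t < 1/2
  have key : ∀ t : ℝ, t < 1/2 →
      Integrable (fun ω => Real.exp (t * X ω)) P ∧
      mgf X P t = ((Real.sqrt (1 - 2 * t))⁻¹) ^ d := by
    intro t ht
    have hprod : ∀ ω : Fin d → ℝ, Real.exp (t * X ω) = ∏ i, Real.exp (t * (ω i) ^ 2) := by
      intro ω
      rw [hXdef, Finset.mul_sum, Real.exp_sum]
    constructor
    · exact (pi_gauss_integrable d (fun x => Real.exp (t * x ^ 2)) (gauss_exp_sq ht).1).congr
        (ae_of_all _ fun ω => (hprod ω).symm)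
    · rw [mgf]
      calc ∫ ω, Real.exp (t * X ω) ∂P = ∫ ω : Fin d → ℝ, ∏ i, Real.exp (t * (ω i) ^ 2) ∂P := by
            simp_rw [hprod]
        _ = (∫ x, Real.exp (t * x ^ 2) ∂(gaussianReal 0 1)) ^ d :=
            pi_gauss_integral d (fun x => Real.exp (t * x ^ 2))
        _ = ((Real.sqrt (1 - 2 * t))⁻¹) ^ d := by rw [(gauss_exp_sq ht).2]
  constructor
  · -- upper tail
    set t : ℝ := ε / (2 * (1 + ε)) with htdef
    have ht0 : 0 ≤ t := by positivity
    have htlt : t < 1/2 := by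
      rw [htdef, div_lt_div_iff₀ (by positivity) (by norm_num : (0:ℝ) < 2)]
      nlinarith
    obtain ⟨hint, hmgf⟩ := key t htlt
    have h12t : 1 - 2 * t = (1 + ε)⁻¹ := by
      have h : (1:ℝ) + ε ≠ 0 := by positivity
      rw [htdef, eq_comm, inv_eq_iff_eq_inv, eq_comm, inv_eq_one_div]
      field_simp
      ring
    have hcher := measure_ge_le_exp_mul_mgf (μ := P) (X := X) ((1 + ε) * d) ht0 hint
    rw [hmgf, h12t, Real.sqrt_inv, inv_inv] at hcher
    -- per-factor bound
    have hA0 : 0 ≤ Real.exp (-(ε/2)) * Real.sqrt (1 + ε) := by positivity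
    have hB0 : 0 ≤ Real.exp (-(ε^2 - ε^3)/4) := (Real.exp_pos _).le
    have hfac : Real.exp (-(ε/2)) * Real.sqrt (1 + ε) ≤ Real.exp (-(ε^2 - ε^3)/4) := by
      have hx : (0:ℝ) ≤ ε - (ε^2 - ε^3)/2 := by nlinarith
      have hq := Real.quadratic_le_exp_of_nonneg hx
      have h1 : 1 + ε ≤ Real.exp (ε - (ε^2 - ε^3)/2) := by nlinarith [sq_nonneg (ε - ε^2)]
      have hsq : (Real.exp (-(ε/2)) * Real.sqrt (1 + ε))^2 ≤ (Real.exp (-(ε^2 - ε^3)/4))^2 := by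
        rw [mul_pow, ← Real.exp_nat_mul, ← Real.exp_nat_mul,
          Real.sq_sqrt (by linarith : (0:ℝ) ≤ 1 + ε)]
        calc Real.exp ((2:ℕ) * (-(ε/2))) * (1 + ε)
            ≤ Real.exp ((2:ℕ) * (-(ε/2))) * Real.exp (ε - (ε^2 - ε^3)/2) := by
              exact mul_le_mul_of_nonneg_left h1 (Real.exp_pos _).le
          _ = Real.exp ((2:ℕ) * (-(ε^2 - ε^3)/4)) := by
              rw [← Real.exp_add]
              norm_num
              ring_nf
        
      have := Real.sqrt_le_sqrt hsq
      rwa [Real.sqrt_sq hA0, Real.sqrt_sq hB0] at this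
    have halg : Real.exp (-t * ((1 + ε) * d)) * (Real.sqrt (1 + ε)) ^ d
        ≤ Real.exp (-(d : ℝ) * (ε^2 - ε^3) / 4) := by
      have ht1 : -t * (1 + ε) = -(ε/2) := by
        rw [htdef]; field_simp
      have h2 : Real.exp (-t * ((1 + ε) * d)) = (Real.exp (-(ε/2))) ^ d := by
        rw [← Real.exp_nat_mul, ← ht1]; ring_nf
      have h3 : Real.exp (-(d : ℝ) * (ε^2 - ε^3) / 4) = (Real.exp (-(ε^2 - ε^3)/4)) ^ d := by
        rw [← Real.exp_nat_mul]; ring_nf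
      rw [h2, h3, ← mul_pow]
      exact pow_le_pow_left₀ hA0 hfac d
    have hset : {x : ℝ | (1 + ε) * d ≤ x} = Set.Ici ((1 + ε) * d) := rfl
    rw [hset, hmap _ measurableSet_Ici]
    have hne : P (X ⁻¹' Set.Ici ((1 + ε) * d)) ≠ ⊤ := measure_ne_top _ _
    rw [← ENNReal.ofReal_toReal hne]
    exact ENNReal.ofReal_le_ofReal (le_trans hcher halg)
  · -- lower tail
    set t : ℝ := -(ε / (2 * (1 - ε))) with htdef
    have h1ε : (0:ℝ) < 1 - ε := by linarith
    have ht0 : t ≤ 0 := by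
      rw [htdef, neg_nonpos]
      positivity
    have htlt : t < 1/2 := lt_of_le_of_lt ht0 (by norm_num)
    obtain ⟨hint, hmgf⟩ := key t htlt
    have h12t : 1 - 2 * t = (1 - ε)⁻¹ := by
      have h : (1:ℝ) - ε ≠ 0 := by linarith
      rw [htdef, eq_comm, inv_eq_iff_eq_inv, eq_comm, inv_eq_one_div]
      field_simp
      ring
    have hcher := measure_le_le_exp_mul_mgf (μ := P) (X := X) ((1 - ε) * d) ht0 hint
    rw [hmgf, h12t, Real.sqrt_inv, inv_inv] at hcher
    have hA0 : 0 ≤ Real.exp (ε/2) * Real.sqrt (1 - ε) := by positivity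
    have hB0 : 0 ≤ Real.exp (-(ε^2 - ε^3)/4) := (Real.exp_pos _).le
    have hfac : Real.exp (ε/2) * Real.sqrt (1 - ε) ≤ Real.exp (-(ε^2 - ε^3)/4) := by
      obtain ⟨g, hgdef⟩ : ∃ g : ℝ, g = ε + ε^2/2 - ε^3/2 := ⟨_, rfl⟩
      have hε2 : ε^2 ≤ 1 := by nlinarith
      have hg0 : 0 ≤ g := by
        rw [hgdef]
        nlinarith [mul_le_mul_of_nonneg_left hε1.le (sq_nonneg ε)]
      have hg1 : g ≤ 1 := by
        rw [hgdef]
        nlinarith [mul_nonneg (by linarith : (0:ℝ) ≤ 1 - ε) (by linarith : (0:ℝ) ≤ 1 - ε^2/2)]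
      have hb := Real.exp_bound (x := -g) (by rwa [abs_neg, abs_of_nonneg hg0]) (n := 3)
        (by norm_num)
      have hexp : 1 - g + g^2/2 - 2/9 * g^3 ≤ Real.exp (-g) := by
        have h3 : ∑ i ∈ Finset.range 3, (-g) ^ i / (i.factorial : ℝ) = 1 - g + g^2/2 := by
          simp [Finset.sum_range_succ, Nat.factorial]
          ring
        rw [h3] at hb
        have habs : |(-g)| ^ 3 * ((3:ℕ).succ / ((3:ℕ).factorial * (3:ℕ)) : ℝ) = 2/9 * g^3 := by
          rw [abs_neg, abs_of_nonneg hg0]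
          norm_num [Nat.factorial]
          ring
        rw [habs] at hb
        have := abs_le.mp hb
        linarith [this.1]
      have hga : g ≤ (9/8) * ε := by
        rw [hgdef]; nlinarith [sq_nonneg (2*ε - 1)]
      have hgc : g^3 ≤ ((9/8) * ε)^3 := pow_le_pow_left₀ hg0 hga 3
      have hA : ε^2 + ε^3 - ε^4 ≤ g^2 := by
        rw [hgdef]; nlinarith [sq_nonneg (ε^2/2 - ε^3/2)]
      have hB : 2/9 * g^3 ≤ ε^3/2 := by nlinarith [hgc, pow_nonneg hε0.le 3]
      have hC : ε^4 ≤ ε^3 := by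
        nlinarith [mul_le_mul_of_nonneg_left hε1.le (pow_nonneg hε0.le 3)]
      have h1 : 1 - ε ≤ Real.exp (-g) := by
        have hglin : g = ε + ε^2/2 - ε^3/2 := hgdef
        linarith [hexp]
      have h2 : 1 - ε ≤ Real.exp (-ε - (ε^2 - ε^3)/2) := by
        calc 1 - ε ≤ Real.exp (-g) := h1
          _ ≤ Real.exp (-ε - (ε^2 - ε^3)/2) := by
              apply Real.exp_le_exp.mpr
              rw [hgdef]
              ring_nf
              linarith
      have hsq : (Real.exp (ε/2) * Real.sqrt (1 - ε))^2 ≤ (Real.exp (-(ε^2 - ε^3)/4))^2 := by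
        rw [mul_pow, ← Real.exp_nat_mul, ← Real.exp_nat_mul,
          Real.sq_sqrt h1ε.le]
        calc Real.exp ((2:ℕ) * (ε/2)) * (1 - ε)
            ≤ Real.exp ((2:ℕ) * (ε/2)) * Real.exp (-ε - (ε^2 - ε^3)/2) := by
              exact mul_le_mul_of_nonneg_left h2 (Real.exp_pos _).le
          _ = Real.exp ((2:ℕ) * (-(ε^2 - ε^3)/4)) := by
              rw [← Real.exp_add]
              norm_num
              ring_nf
      have := Real.sqrt_le_sqrt hsq
      rwa [Real.sqrt_sq hA0, Real.sqrt_sq hB0] at this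
    have halg : Real.exp (-t * ((1 - ε) * d)) * (Real.sqrt (1 - ε)) ^ d
        ≤ Real.exp (-(d : ℝ) * (ε^2 - ε^3) / 4) := by
      have ht1 : -t * (1 - ε) = ε/2 := by
        have h : (1:ℝ) - ε ≠ 0 := ne_of_gt h1ε
        rw [htdef, neg_neg]
        field_simp
      have h2 : Real.exp (-t * ((1 - ε) * d)) = (Real.exp (ε/2)) ^ d := by
        rw [← Real.exp_nat_mul, ← ht1]; ring_nf
      have h3 : Real.exp (-(d : ℝ) * (ε^2 - ε^3) / 4) = (Real.exp (-(ε^2 - ε^3)/4)) ^ d := by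
        rw [← Real.exp_nat_mul]; ring_nf
      rw [h2, h3, ← mul_pow]
      exact pow_le_pow_left₀ hA0 hfac d
    have hset : {x : ℝ | x ≤ (1 - ε) * d} = Set.Iic ((1 - ε) * d) := rfl
    rw [hset, hmap _ measurableSet_Iic]
    have hne : P (X ⁻¹' Set.Iic ((1 - ε) * d)) ≠ ⊤ := measure_ne_top _ _
    rw [← ENNReal.ofReal_toReal hne]
    exact ENNReal.ofReal_le_ofReal (le_trans hcher halg)
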